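/- Let g : ℝ^m × ℝ^n → ℝ be continuously differentiable, μ-strongly convex in y for each x, with ∇g being L-Lipschitz jointly in (x,y). Let y*(x) denote the unique minimizer of g(x, ·). Then y* is (L/μ)-Lipschitz: ‖y*(x) - y*(x')‖ ≤ (L/μ)‖x - x'‖ for all x, x'. -/

import Mathlib

open scoped RealInnerProductSpace

/-- Gradient monotonicity of a convex function on `univ`. -/
lemma grad_mono_of_convex {F : Type*} [NormedAddCommGroup F] [InnerProductSpace ℝ F]
    [CompleteSpace F] {f : F → ℝ} {f' : F → F} (hf : ∀ z, HasGradientAt f (f' z) z)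
    (hc : ConvexOn ℝ Set.univ f) (a b : F) :
    ⟪f' a, b - a⟫ ≤ ⟪f' b, b - a⟫ := by
  set φ : ℝ → ℝ := f ∘ (AffineMap.lineMap a b) with hφ
  have hφc : ConvexOn ℝ Set.univ φ := by
    have := hc.comp_affineMap (AffineMap.lineMap a b)
    simpa using this
  have hd : ∀ t : ℝ, HasDerivAt φ ⟪f' (AffineMap.lineMap a b t), b - a⟫ t := by
    intro t
    have h1 : HasDerivAt (AffineMap.lineMap a b : ℝ → F) (b - a) t := AffineMap.hasDerivAt_lineMap
    have h2 := ((hf (AffineMap.lineMap a b t)).hasFDerivAt).comp_hasDerivAt t h1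
    simpa [φ, InnerProductSpace.toDual_apply_apply] using h2
  have h0 := hφc.le_slope_of_hasDerivAt (Set.mem_univ 0) (Set.mem_univ 1) zero_lt_one
    (by simpa using hd 0)
  have h1 := hφc.slope_le_of_hasDerivAt (Set.mem_univ 0) (Set.mem_univ 1) zero_lt_one
    (by simpa using hd 1)
  calc ⟪f' a, b - a⟫ ≤ slope φ 0 1 := h0
    _ ≤ ⟪f' b, b - a⟫ := h1

/-- Strong convexity gives coercive gradient monotonicity. -/
lemma grad_strong_mono {F : Type*} [NormedAddCommGroup F] [InnerProductSpace ℝ F]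
    [CompleteSpace F] {f : F → ℝ} {f' : F → F} {μ : ℝ}
    (hf : ∀ z, HasGradientAt f (f' z) z)
    (hc : StrongConvexOn Set.univ μ f) (a b : F) :
    μ * ‖b - a‖ ^ 2 ≤ ⟪f' b - f' a, b - a⟫ := by
  have hconv : ConvexOn ℝ Set.univ fun z => f z - μ / 2 * ‖z‖ ^ 2 :=
    strongConvexOn_iff_convex.mp hc
  have hgrad : ∀ z : F, HasGradientAt (fun z => f z - μ / 2 * ‖z‖ ^ 2) (f' z - μ • z) z := by
    intro z
    have h1 : HasFDerivAt (fun z : F => ‖z‖ ^ 2) (2 • (innerSL ℝ z)) z :=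
      (hasStrictFDerivAt_norm_sq z).hasFDerivAt
    have h2 : HasFDerivAt (fun z : F => μ / 2 * ‖z‖ ^ 2) ((μ / 2) • (2 • (innerSL ℝ z))) z :=
      h1.const_smul (μ / 2)
    have h3 := (hf z).hasFDerivAt.sub h2
    rw [hasGradientAt_iff_hasFDerivAt]
    refine h3.congr_fderiv ?_
    ext w
    simp [InnerProductSpace.toDual_apply_apply, inner_sub_left, real_inner_smul_left]
    ring
  have := grad_mono_of_convex hgrad hconv a b
  have hin : ⟪f' b - f' a, b - a⟫ - μ * ⟪b - a, b - a⟫ =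
      ⟪f' b - μ • b, b - a⟫ - ⟪f' a - μ • a, b - a⟫ := by
    simp [inner_sub_left, real_inner_smul_left, inner_sub_right]
    rw [norm_sub_sq_real, real_inner_comm a b]
    ring
  have hn : ⟪b - a, b - a⟫ = ‖b - a‖ ^ 2 := real_inner_self_eq_norm_sq _
  rw [← hn]; linarith [this, hin]

/-- Lipschitz continuity of the lower-level solution map `y*` for a function
`g(x,y)` that is `μ`-strongly convex in `y` and has a jointly `L`-Lipschitz
gradient (joint ℓ₂ norm on the product): `‖y*(x) - y*(x')‖ ≤ (L/μ)‖x - x'‖`. -/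
theorem stmt_4 {m n : ℕ}
    (g : EuclideanSpace ℝ (Fin m) → EuclideanSpace ℝ (Fin n) → ℝ)
    (gy : EuclideanSpace ℝ (Fin m) → EuclideanSpace ℝ (Fin n) → EuclideanSpace ℝ (Fin n))
    (hgrad : ∀ x y, HasGradientAt (g x) (gy x y) y)
    (μ L : ℝ) (hμ : 0 < μ) (hL : 0 < L)
    (hsc : ∀ x, StrongConvexOn Set.univ μ (g x))
    (hlip : ∀ x x' y y',
      ‖gy x y - gy x' y'‖ ≤ L * Real.sqrt (‖x - x'‖ ^ 2 + ‖y - y'‖ ^ 2))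
    (ystar : EuclideanSpace ℝ (Fin m) → EuclideanSpace ℝ (Fin n))
    (hstar : ∀ x, gy x (ystar x) = 0) :
    ∀ x x', ‖ystar x - ystar x'‖ ≤ (L / μ) * ‖x - x'‖ := by
  intro x x'
  set a := ystar x' with ha
  set b := ystar x with hb
  have hmono := grad_strong_mono (hgrad x) (hsc x) a b
  rw [hstar x] at hmono
  -- μ‖b-a‖² ≤ ⟪0 - gy x a, b - a⟫ = ⟪gy x' a - gy x a, b - a⟫
  have heq : (0 : EuclideanSpace ℝ (Fin n)) - gy x a = gy x' a - gy x a := by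
    rw [hstar x']
  rw [heq] at hmono
  have hcs : ⟪gy x' a - gy x a, b - a⟫ ≤ ‖gy x' a - gy x a‖ * ‖b - a‖ :=
    real_inner_le_norm _ _
  have hlipbound : ‖gy x' a - gy x a‖ ≤ L * ‖x - x'‖ := by
    have := hlip x' x a a
    simpa [norm_sub_rev x' x, Real.sqrt_sq_eq_abs, abs_of_nonneg (norm_nonneg _)] using this
  by_cases hz : ‖b - a‖ = 0
  · rw [hz]
    positivity
  · have hpos : 0 < ‖b - a‖ := lt_of_le_of_ne (norm_nonneg _) (Ne.symm hz)
    have key : μ * ‖b - a‖ ^ 2 ≤ L * ‖x - x'‖ * ‖b - a‖ := by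
      calc μ * ‖b - a‖ ^ 2 ≤ ⟪gy x' a - gy x a, b - a⟫ := hmono
        _ ≤ ‖gy x' a - gy x a‖ * ‖b - a‖ := hcs
        _ ≤ L * ‖x - x'‖ * ‖b - a‖ := by
            apply mul_le_mul_of_nonneg_right hlipbound (norm_nonneg _)
    rw [div_mul_eq_mul_div, le_div_iff₀ hμ]
    nlinarith
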